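/- In an optimal correspondence between padded strings p(x) and p(y) over a metric Σ ∪ {∅}, one may assume without loss of generality that the only extended runs are runs of the ∅ character: there exists an optimal correspondence between p(x) and p(y) in which no run of a non-∅ letter is extended. -/

import Mathlib

open scoped BigOperators

variable {α : Type*}

/-- `xb` is the expansion of `x` obtained by replacing the `i`-th letter of `x`
with `ks[i] ≥ 1` consecutive copies of itself (equivalently, by extending runs). -/
def IsExpansionWith (x : List α) (ks : List ℕ) (xb : List α) : Prop :=
  ks.length = x.length ∧ (∀ k ∈ ks, 1 ≤ k) ∧
    xb = (x.zip ks).flatMap fun p => List.replicate p.2 p.1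

/-- `xb` is an expansion of `x` (obtained by extending runs). -/
def IsExpansion (x xb : List α) : Prop := ∃ ks, IsExpansionWith x ks xb

/-- The cost of a correspondence: sum of pointwise distances. -/
def corrCost (d : α → α → ℝ) (xb yb : List α) : ℝ :=
  ((xb.zip yb).map fun p => d p.1 p.2).sum

/-- A correspondence between `x` and `y`: a pair of equal-length expansions. -/
def IsCorrespondence (x y xb yb : List α) : Prop :=
  IsExpansion x xb ∧ IsExpansion y yb ∧ xb.length = yb.length

/-- Dynamic time warping distance: minimum cost of a correspondence. -/
noncomputable def dtw (d : α → α → ℝ) (x y : List α) : ℝ :=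
  sInf {c | ∃ xb yb, IsCorrespondence x y xb yb ∧ c = corrCost d xb yb}

/-- The maximal runs of equal letters of a list. -/
def runsOf [DecidableEq α] (x : List α) : List (List α) := x.splitBy (· == ·)

/-- Number of runs. -/
def numRuns [DecidableEq α] (x : List α) : ℕ := (runsOf x).length

/-- Length of the final run. -/
def lastRunLen [DecidableEq α] (x : List α) : ℕ := ((runsOf x).getLastD []).length

/-- Length of the `i`-th run (0-indexed). -/
def runLen [DecidableEq α] (x : List α) (i : ℕ) : ℕ := ((runsOf x).getD i []).length

/-- The letter populating the `i`-th run (0-indexed). -/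
def runLetter [DecidableEq α] [Inhabited α] (x : List α) (i : ℕ) : α :=
  ((runsOf x).getD i []).headI

/-- The concatenation of the first `k` runs of `x`. -/
def firstRuns [DecidableEq α] (k : ℕ) (x : List α) : List α := ((runsOf x).take k).flatten

/-- The prefix of `y` consisting of its first `ry` runs, up through the `oy`-th
letter of the `ry`-th run (runs are 1-indexed here). -/
def runPrefix [DecidableEq α] (ry oy : ℕ) (y : List α) : List α :=
  firstRuns (ry - 1) y ++ ((runsOf y).getD (ry - 1) []).take oy

/-- The subproblem `SP(x, y, rx, ry, oy)`: the minimum cost of a correspondence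
between the first `rx` runs of `x` and the prefix of `y` ending at the `oy`-th
letter of its `ry`-th run, under the constraint that the final (`ry`-th) run of
the `y`-prefix is not extended; `⊤` if no such correspondence exists. -/
noncomputable def SP [DecidableEq α] (d : α → α → ℝ) (x y : List α) (rx ry oy : ℕ) : EReal :=
  sInf ((fun p : List α × List α => ((corrCost d p.1 p.2 : ℝ) : EReal)) ''
    {p | IsCorrespondence (firstRuns rx x) (runPrefix ry oy y) p.1 p.2 ∧
         (0 < oy → lastRunLen p.2 = oy)})

/-- Generalized edit distance over a metric with null character `nul`:
insertion/deletion of `l` costs `d nul l`, substitution of `l` by `l'` costs `d l l'`. -/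
noncomputable def ged (d : α → α → ℝ) (nul : α) : List α → List α → ℝ
  | [], [] => 0
  | [], b :: ys => d nul b + ged d nul [] ys
  | a :: xs, [] => d nul a + ged d nul xs []
  | a :: xs, b :: ys =>
      min (d a b + ged d nul xs ys)
        (min (d nul a + ged d nul xs (b :: ys)) (d nul b + ged d nul (a :: xs) ys))
  termination_by x y => x.length + y.length

/-- Simple (Hamming/Levenshtein) edit distance: unit-cost insertions, deletions
and substitutions. -/
def edH [DecidableEq α] : List α → List α → ℕ
  | [], ys => ys.length
  | xs, [] => xs.length
  | a :: xs, b :: ys =>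
      min ((if a = b then 0 else 1) + edH xs ys)
        (min (1 + edH xs (b :: ys)) (1 + edH (a :: xs) ys))
  termination_by x y => x.length + y.length

/-- Simple edit distance with only unit-cost insertions and deletions. -/
def edS [DecidableEq α] : List α → List α → ℕ
  | [], ys => ys.length
  | xs, [] => xs.length
  | a :: xs, b :: ys =>
      if a = b then
        min (edS xs ys) (min (1 + edS xs (b :: ys)) (1 + edS (a :: xs) ys))
      else
        min (1 + edS xs (b :: ys)) (1 + edS (a :: xs) ys)
  termination_by x y => x.length + y.length

/-- The padded string `p(x) = ∅ x₁ ∅ x₂ ∅ ⋯ xₙ ∅`. -/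
def pad (nul : α) (x : List α) : List α := nul :: x.flatMap fun a => [a, nul]

/-- The `r`-simplification for edit distance: remove all letters of magnitude at most `r`. -/
noncomputable def sEd [MetricSpace α] (nul : α) (r : ℝ) (x : List α) : List α :=
  x.filter fun l => decide (r < dist nul l)


namespace Stmt4Aux

variable {α : Type*}

/-- Cost of a list of aligned pairs. -/
def wcost (d : α → α → ℝ) (w : List (α × α)) : ℝ := (w.map fun p => d p.1 p.2).sum

@[simp] lemma wcost_nil (d : α → α → ℝ) : wcost d ([] : List (α × α)) = 0 := rfl

@[simp] lemma wcost_cons (d : α → α → ℝ) (p : α × α) (w : List (α × α)) :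
    wcost d (p :: w) = d p.1 p.2 + wcost d w := by simp [wcost]

lemma wcost_append (d : α → α → ℝ) (u v : List (α × α)) :
    wcost d (u ++ v) = wcost d u + wcost d v := by simp [wcost]

lemma wcost_nonneg [MetricSpace α] (w : List (α × α)) : 0 ≤ wcost dist w := by
  apply List.sum_nonneg
  intro r hr
  obtain ⟨p, -, rfl⟩ := List.mem_map.1 hr
  exact dist_nonneg

lemma wcost_swap [MetricSpace α] (w : List (α × α)) :
    wcost dist (w.map Prod.swap) = wcost dist w := by
  simp [wcost, List.map_map, Function.comp]
  congr 1
  apply List.map_congr_left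
  intro p _
  exact dist_comm _ _

/-- Correspondences with multiplicity bookkeeping, built letter-by-letter from the front. -/
inductive AlK : List α → List ℕ → List α → List ℕ → List (α × α) → Prop
  | nil : AlK [] [] [] [] []
  | consBoth {x kx y ky w} (a b : α) : AlK x kx y ky w →
      AlK (a::x) (1::kx) (b::y) (1::ky) ((a,b)::w)
  | consA {x kx y ky w} {k : ℕ} (a b : α) : AlK (a::x) (k::kx) y ky w →
      AlK (a::x) ((k+1)::kx) (b::y) (1::ky) ((a,b)::w)
  | consB {x kx y ky w} {k : ℕ} (a b : α) : AlK x kx (b::y) (k::ky) w →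
      AlK (a::x) (1::kx) (b::y) ((k+1)::ky) ((a,b)::w)
  | consAB {x kx y ky w} {j k : ℕ} (a b : α) : AlK (a::x) (j::kx) (b::y) (k::ky) w →
      AlK (a::x) ((j+1)::kx) (b::y) ((k+1)::ky) ((a,b)::w)

/-- Like `AlK` but without the doubly-extending constructor. -/
inductive AlK2 : List α → List ℕ → List α → List ℕ → List (α × α) → Prop
  | nil : AlK2 [] [] [] [] []
  | consBoth {x kx y ky w} (a b : α) : AlK2 x kx y ky w →
      AlK2 (a::x) (1::kx) (b::y) (1::ky) ((a,b)::w)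
  | consA {x kx y ky w} {k : ℕ} (a b : α) : AlK2 (a::x) (k::kx) y ky w →
      AlK2 (a::x) ((k+1)::kx) (b::y) (1::ky) ((a,b)::w)
  | consB {x kx y ky w} {k : ℕ} (a b : α) : AlK2 x kx (b::y) (k::ky) w →
      AlK2 (a::x) (1::kx) (b::y) ((k+1)::ky) ((a,b)::w)

/-- Normalized correspondences: only the null letter may be extended. -/
inductive AlN (nul : α) : List α → List ℕ → List α → List ℕ → List (α × α) → Prop
  | nil : AlN nul [] [] [] [] []
  | consBoth {x kx y ky w} (a b : α) : AlN nul x kx y ky w →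
      AlN nul (a::x) (1::kx) (b::y) (1::ky) ((a,b)::w)
  | consA {x kx y ky w} {k : ℕ} (b : α) : AlN nul (nul::x) (k::kx) y ky w →
      AlN nul (nul::x) ((k+1)::kx) (b::y) (1::ky) ((nul,b)::w)
  | consB {x kx y ky w} {k : ℕ} (a : α) : AlN nul x kx (nul::y) (k::ky) w →
      AlN nul (a::x) (1::kx) (nul::y) ((k+1)::ky) ((a,nul)::w)

/-- Suffixes of padded strings: strictly alternating, ending with `nul`. -/
inductive PT (nul : α) : List α → Prop
  | nil : PT nul []
  | one : PT nul [nul]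
  | consN {l} (a : α) : a ≠ nul → PT nul (a :: l) → PT nul (nul :: a :: l)
  | consA {l} (a : α) : a ≠ nul → PT nul (nul :: l) → PT nul (a :: nul :: l)

lemma AlN_to_AlK2 {nul : α} {x kx y ky w} (h : AlN nul x kx y ky w) :
    AlK2 x kx y ky w := by
  induction h with
  | nil => exact AlK2.nil
  | consBoth a b _ ih => exact AlK2.consBoth a b ih
  | consA b _ ih => exact AlK2.consA _ b ih
  | consB a _ ih => exact AlK2.consB a _ ih

lemma AlK2_to_AlK {x : List α} {kx y ky w} (h : AlK2 x kx y ky w) :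
    AlK x kx y ky w := by
  induction h with
  | nil => exact AlK.nil
  | consBoth a b _ ih => exact AlK.consBoth a b ih
  | consA a b _ ih => exact AlK.consA a b ih
  | consB a b _ ih => exact AlK.consB a b ih

lemma AlK_expansions {x : List α} {kx y ky w} (h : AlK x kx y ky w) :
    IsExpansionWith x kx (w.map Prod.fst) ∧ IsExpansionWith y ky (w.map Prod.snd) := by
  induction h with
  | nil => exact ⟨⟨rfl, by simp, by simp⟩, ⟨rfl, by simp, by simp⟩⟩
  | consBoth a b _ ih =>
      obtain ⟨⟨hx1, hx2, hx3⟩, ⟨hy1, hy2, hy3⟩⟩ := ih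
      refine ⟨⟨by simp [hx1], ?_, ?_⟩, ⟨by simp [hy1], ?_, ?_⟩⟩
      · intro k hk; rcases List.mem_cons.1 hk with h | h; · omega
        exact hx2 k h
      · simp [List.replicate_succ]; exact hx3
      · intro k hk; rcases List.mem_cons.1 hk with h | h; · omega
        exact hy2 k h
      · simp [List.replicate_succ]; exact hy3
  | consA a b _ ih =>
      obtain ⟨⟨hx1, hx2, hx3⟩, ⟨hy1, hy2, hy3⟩⟩ := ih
      refine ⟨⟨by simpa using hx1, ?_, ?_⟩, ⟨by simp [hy1], ?_, ?_⟩⟩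
      · intro k hk; rcases List.mem_cons.1 hk with h | h; · omega
        exact hx2 k (List.mem_cons_of_mem _ h)
      · simp only [List.map_cons]
        simp only [List.zip_cons_cons, List.flatMap_cons] at hx3 ⊢
        rw [List.replicate_succ]
        simp only [List.cons_append]
        rw [← hx3]
      · intro k hk; rcases List.mem_cons.1 hk with h | h; · omega
        exact hy2 k h
      · simp [List.replicate_succ]; exact hy3
  | consB a b _ ih =>
      obtain ⟨⟨hx1, hx2, hx3⟩, ⟨hy1, hy2, hy3⟩⟩ := ih
      refine ⟨⟨by simp [hx1], ?_, ?_⟩, ⟨by simpa using hy1, ?_, ?_⟩⟩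
      · intro k hk; rcases List.mem_cons.1 hk with h | h; · omega
        exact hx2 k h
      · simp [List.replicate_succ]; exact hx3
      · intro k hk; rcases List.mem_cons.1 hk with h | h; · omega
        exact hy2 k (List.mem_cons_of_mem _ h)
      · simp only [List.map_cons]
        simp only [List.zip_cons_cons, List.flatMap_cons] at hy3 ⊢
        rw [List.replicate_succ]
        simp only [List.cons_append]
        rw [← hy3]
  | consAB a b _ ih =>
      obtain ⟨⟨hx1, hx2, hx3⟩, ⟨hy1, hy2, hy3⟩⟩ := ih
      refine ⟨⟨by simpa using hx1, ?_, ?_⟩, ⟨by simpa using hy1, ?_, ?_⟩⟩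
      · intro k hk; rcases List.mem_cons.1 hk with h | h; · omega
        exact hx2 k (List.mem_cons_of_mem _ h)
      · simp only [List.map_cons]
        simp only [List.zip_cons_cons, List.flatMap_cons] at hx3 ⊢
        rw [List.replicate_succ]
        simp only [List.cons_append]
        rw [← hx3]
      · intro k hk; rcases List.mem_cons.1 hk with h | h; · omega
        exact hy2 k (List.mem_cons_of_mem _ h)
      · simp only [List.map_cons]
        simp only [List.zip_cons_cons, List.flatMap_cons] at hy3 ⊢
        rw [List.replicate_succ]
        simp only [List.cons_append]
        rw [← hy3]

lemma AlN_len {nul : α} {x kx y ky w} (h : AlN nul x kx y ky w) :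
    kx.length = x.length ∧ ky.length = y.length := by
  induction h with
  | nil => exact ⟨rfl, rfl⟩
  | consBoth a b _ ih => simp [ih.1, ih.2]
  | consA b _ ih => simp at ih ⊢; exact ⟨ih.1, ih.2⟩
  | consB a _ ih => simp at ih ⊢; exact ⟨ih.1, ih.2⟩

lemma AlK2_len {x : List α} {kx y ky w} (h : AlK2 x kx y ky w) :
    kx.length = x.length ∧ ky.length = y.length := by
  induction h with
  | nil => exact ⟨rfl, rfl⟩
  | consBoth a b _ ih => simp [ih.1, ih.2]
  | consA a b _ ih => simp at ih ⊢; exact ⟨ih.1, ih.2⟩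
  | consB a b _ ih => simp at ih ⊢; exact ⟨ih.1, ih.2⟩

lemma AlN_nonnul_mult {nul : α} {x kx y ky w} (h : AlN nul x kx y ky w) :
    (∀ p ∈ x.zip kx, p.1 ≠ nul → p.2 = 1) ∧ (∀ p ∈ y.zip ky, p.1 ≠ nul → p.2 = 1) := by
  induction h with
  | nil => simp
  | consBoth a b _ ih =>
      refine ⟨?_, ?_⟩ <;> intro p hp hpn
      · rcases List.mem_cons.1 hp with rfl | h
        · rfl
        · exact ih.1 p h hpn
      · rcases List.mem_cons.1 hp with rfl | h
        · rfl
        · exact ih.2 p h hpn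
  | consA b _ ih =>
      refine ⟨?_, ?_⟩ <;> intro p hp hpn
      · rcases List.mem_cons.1 hp with rfl | h
        · exact absurd rfl hpn
        · exact ih.1 p (List.mem_cons_of_mem _ h) hpn
      · rcases List.mem_cons.1 hp with rfl | h
        · rfl
        · exact ih.2 p h hpn
  | consB a _ ih =>
      refine ⟨?_, ?_⟩ <;> intro p hp hpn
      · rcases List.mem_cons.1 hp with rfl | h
        · rfl
        · exact ih.1 p h hpn
      · rcases List.mem_cons.1 hp with rfl | h
        · exact absurd rfl hpn
        · exact ih.2 p (List.mem_cons_of_mem _ h) hpn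

lemma AlN_pairs_mem {nul : α} {x kx y ky w} (h : AlN nul x kx y ky w) :
    ∀ p ∈ w, p.1 ∈ x ∧ p.2 ∈ y := by
  induction h with
  | nil => simp
  | consBoth a b _ ih =>
      intro p hp
      rcases List.mem_cons.1 hp with rfl | h
      · simp
      · exact ⟨List.mem_cons_of_mem _ (ih p h).1, List.mem_cons_of_mem _ (ih p h).2⟩
  | consA b _ ih =>
      intro p hp
      rcases List.mem_cons.1 hp with rfl | h
      · simp
      · exact ⟨(ih p h).1, List.mem_cons_of_mem _ (ih p h).2⟩
  | consB a _ ih =>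
      intro p hp
      rcases List.mem_cons.1 hp with rfl | h
      · simp
      · exact ⟨List.mem_cons_of_mem _ (ih p h).1, (ih p h).2⟩

lemma AlN_len_bound {nul : α} {x kx y ky w} (h : AlN nul x kx y ky w) :
    w.length ≤ x.length + y.length := by
  induction h with
  | nil => simp
  | consBoth a b _ ih => simp; omega
  | consA b _ ih => simp at ih ⊢; omega
  | consB a _ ih => simp at ih ⊢; omega

lemma AlN_diag (nul : α) : ∀ (u v : List α), u.length = v.length →
    AlN nul u (List.replicate u.length 1) v (List.replicate v.length 1) (u.zip v) := by
  intro u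
  induction u with
  | nil =>
      intro v hv
      have hv0 : v = [] := by simpa using hv.symm
      subst hv0; exact AlN.nil
  | cons a u ih =>
      intro v hv
      cases v with
      | nil => simp at hv
      | cons b v =>
          simp only [List.length_cons, List.replicate_succ, List.zip_cons_cons]
          exact AlN.consBoth a b (ih v (by simpa using hv))
lemma AlK2_swap {x : List α} {kx y ky w} (h : AlK2 x kx y ky w) :
    AlK2 y ky x kx (w.map Prod.swap) := by
  induction h with
  | nil => exact AlK2.nil
  | consBoth a b _ ih => exact AlK2.consBoth b a ih
  | consA a b _ ih => exact AlK2.consB b a ih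
  | consB a b _ ih => exact AlK2.consA b a ih

lemma AlN_swap {nul : α} {x kx y ky w} (h : AlN nul x kx y ky w) :
    AlN nul y ky x kx (w.map Prod.swap) := by
  induction h with
  | nil => exact AlN.nil
  | consBoth a b _ ih => exact AlN.consBoth b a ih
  | consA b _ ih => exact AlN.consB b ih
  | consB a _ ih => exact AlN.consA a ih

lemma expansion_nil {x : List α} {ks : List ℕ} (h : IsExpansionWith x ks ([] : List α)) :
    x = [] ∧ ks = [] := by
  obtain ⟨hl, hk, hf⟩ := h
  cases x with
  | nil =>
      refine ⟨rfl, ?_⟩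
      simpa using List.length_eq_zero_iff.mp (by simpa using hl)
  | cons a x =>
      cases ks with
      | nil => simp at hl
      | cons k ks =>
          exfalso
          have h1 : 1 ≤ k := hk k List.mem_cons_self
          simp only [List.zip_cons_cons, List.flatMap_cons] at hf
          cases k with
          | zero => omega
          | succ k => simp [List.replicate_succ] at hf

lemma expansion_cons {x : List α} {ks : List ℕ} {u : α} {xb : List α}
    (h : IsExpansionWith x ks (u :: xb)) :
    ∃ a x' k ks', x = a :: x' ∧ ks = k :: ks' ∧ u = a ∧
      ((k = 1 ∧ IsExpansionWith x' ks' xb) ∨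
        (∃ m, k = m + 1 ∧ IsExpansionWith (a :: x') (m :: ks') xb)) := by
  obtain ⟨hl, hk, hf⟩ := h
  cases x with
  | nil => simp at hf
  | cons a x' =>
      cases ks with
      | nil => simp at hl
      | cons k ks' =>
          have h1 : 1 ≤ k := hk k List.mem_cons_self
          obtain ⟨m, rfl⟩ : ∃ m, k = m + 1 := ⟨k - 1, by omega⟩
          simp only [List.zip_cons_cons, List.flatMap_cons, List.replicate_succ,
            List.cons_append] at hf
          obtain ⟨rfl, hxb⟩ := List.cons_eq_cons.mp hf
          refine ⟨u, x', m + 1, ks', rfl, rfl, rfl, ?_⟩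
          cases m with
          | zero =>
              left
              refine ⟨rfl, by simpa using hl, fun k hk' => hk k (List.mem_cons_of_mem _ hk'), ?_⟩
              simpa using hxb
          | succ m =>
              right
              refine ⟨m + 1, rfl, by simpa using hl, ?_, ?_⟩
              · intro j hj
                rcases List.mem_cons.1 hj with rfl | hj
                · omega
                · exact hk j (List.mem_cons_of_mem _ hj)
              · simp only [List.zip_cons_cons, List.flatMap_cons]
                rw [hxb]

lemma corr_to_AlK : ∀ (xb yb x : List α) (kx : List ℕ) (y : List α) (ky : List ℕ),
    IsExpansionWith x kx xb → IsExpansionWith y ky yb → xb.length = yb.length →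
    AlK x kx y ky (xb.zip yb) := by
  intro xb
  induction xb with
  | nil =>
      intro yb x kx y ky hx hy hlen
      have hyb : yb = [] := List.length_eq_zero_iff.mp (by simpa using hlen.symm)
      subst hyb
      obtain ⟨rfl, rfl⟩ := expansion_nil hx
      obtain ⟨rfl, rfl⟩ := expansion_nil hy
      exact AlK.nil
  | cons u xb ih =>
      intro yb x kx y ky hx hy hlen
      cases yb with
      | nil => simp at hlen
      | cons v yb =>
          obtain ⟨a, x', k, kx', rfl, rfl, rfl, hX⟩ := expansion_cons hx
          obtain ⟨b, y', kk, ky', rfl, rfl, rfl, hY⟩ := expansion_cons hy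
          have hlen' : xb.length = yb.length := by simpa using hlen
          simp only [List.zip_cons_cons]
          rcases hX with ⟨rfl, hX⟩ | ⟨m, rfl, hX⟩ <;> rcases hY with ⟨rfl, hY⟩ | ⟨mm, rfl, hY⟩
          · exact AlK.consBoth _ _ (ih yb _ _ _ _ hX hY hlen')
          · exact AlK.consB _ _ (ih yb _ _ _ _ hX hY hlen')
          · exact AlK.consA _ _ (ih yb _ _ _ _ hX hY hlen')
          · exact AlK.consAB _ _ (ih yb _ _ _ _ hX hY hlen')

lemma collapse [MetricSpace α] {x : List α} {kx y ky w} (h : AlK x kx y ky w) :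
    ∃ kx' ky' w', AlK2 x kx' y ky' w' ∧ wcost dist w' ≤ wcost dist w := by
  induction h with
  | nil => exact ⟨[], [], [], AlK2.nil, le_refl _⟩
  | consBoth a b _ ih =>
      obtain ⟨kx', ky', w', h2, hc⟩ := ih
      exact ⟨1::kx', 1::ky', (a,b)::w', AlK2.consBoth a b h2,
        by simp only [wcost_cons]; exact (add_le_add_iff_left _).2 hc⟩
  | consA a b h0 ih =>
      obtain ⟨kx', ky', w', h2, hc⟩ := ih
      obtain ⟨k₁, kxt, rfl⟩ : ∃ k₁ kxt, kx' = k₁ :: kxt := by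
        have := (AlK2_len h2).1
        cases kx' with
        | nil => simp at this
        | cons k₁ kxt => exact ⟨k₁, kxt, rfl⟩
      exact ⟨(k₁+1)::kxt, 1::ky', (a,b)::w', AlK2.consA a b h2,
        by simp only [wcost_cons]; exact (add_le_add_iff_left _).2 hc⟩
  | consB a b h0 ih =>
      obtain ⟨kx', ky', w', h2, hc⟩ := ih
      obtain ⟨k₁, kyt, rfl⟩ : ∃ k₁ kyt, ky' = k₁ :: kyt := by
        have := (AlK2_len h2).2
        cases ky' with
        | nil => simp at this
        | cons k₁ kyt => exact ⟨k₁, kyt, rfl⟩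
      exact ⟨1::kx', (k₁+1)::kyt, (a,b)::w', AlK2.consB a b h2,
        by simp only [wcost_cons]; exact (add_le_add_iff_left _).2 hc⟩
  | consAB a b h0 ih =>
      obtain ⟨kx', ky', w', h2, hc⟩ := ih
      refine ⟨kx', ky', w', h2, ?_⟩
      calc wcost dist w' ≤ wcost dist _ := hc
        _ ≤ _ := by simp

lemma pt_tail {nul : α} : ∀ {l : List α}, PT nul l → PT nul l.tail := by
  intro l h
  cases h with
  | nil => exact PT.nil
  | one => exact PT.nil
  | consN a ha h => exact h
  | consA a ha h => exact h

lemma pt_cons_nonnul {nul a : α} {l : List α} (h : PT nul (a :: l)) (ha : a ≠ nul) :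
    ∃ l', l = nul :: l' ∧ PT nul (nul :: l') := by
  cases h with
  | one => exact absurd rfl ha
  | consN b hb h => exact absurd rfl ha
  | consA b hb h => exact ⟨_, rfl, h⟩

lemma pt_nul_tail {nul : α} {l : List α} (h : PT nul (nul :: l)) :
    PT nul l ∧ (l = [] ∨ ∃ b l', l = b :: l' ∧ b ≠ nul) := by
  cases h with
  | one => exact ⟨PT.nil, Or.inl rfl⟩
  | consN b hb h => exact ⟨h, Or.inr ⟨b, _, rfl, hb⟩⟩
  | consA b hb h => exact absurd rfl hb

/-- Prepend a fresh `nul` on the `x` side, pairing it with a nonempty list of fresh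
`y`-letters `cs`. -/
lemma prependP {nul : α} {x kx y ky w} (h : AlN nul x kx y ky w) :
    ∀ (cs : List α), cs ≠ [] →
      AlN nul (nul :: x) (cs.length :: kx) (cs ++ y) (List.replicate cs.length 1 ++ ky)
        (cs.map (fun c => (nul, c)) ++ w) := by
  intro cs
  induction cs with
  | nil => intro hne; exact absurd rfl hne
  | cons c cs ih =>
      intro _
      cases cs with
      | nil => simpa using AlN.consBoth nul c h
      | cons c' cs' =>
          have h2 := ih (by simp)
          simpa [List.replicate_succ] using AlN.consA c h2

/-- Prepend a fresh `nul` on the `y` side, pairing it with a nonempty list of fresh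
`x`-letters `ds`. -/
lemma prependQ {nul : α} {x kx y ky w} (h : AlN nul x kx y ky w) :
    ∀ (ds : List α), ds ≠ [] →
      AlN nul (ds ++ x) (List.replicate ds.length 1 ++ kx) (nul :: y) (ds.length :: ky)
        (ds.map (fun d => (d, nul)) ++ w) := by
  intro ds
  induction ds with
  | nil => intro hne; exact absurd rfl hne
  | cons c ds ih =>
      intro _
      cases ds with
      | nil => simpa using AlN.consBoth c nul h
      | cons c' ds' =>
          have h2 := ih (by simp)
          simpa [List.replicate_succ] using AlN.consB c h2

lemma wcost_map_left [MetricSpace α] (nul : α) (cs : List α) (hcs : ∀ c ∈ cs, c = nul) :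
    wcost dist (cs.map (fun c => (nul, c))) = 0 := by
  induction cs with
  | nil => simp
  | cons c cs ih =>
      have hc : c = nul := hcs c List.mem_cons_self
      subst hc
      simp [ih (fun c hc => hcs c (List.mem_cons_of_mem _ hc))]

lemma wcost_map_right [MetricSpace α] (nul : α) (ds : List α) (hds : ∀ c ∈ ds, c = nul) :
    wcost dist (ds.map (fun d => (d, nul))) = 0 := by
  induction ds with
  | nil => simp
  | cons c ds ih =>
      have hc : c = nul := hds c List.mem_cons_self
      subst hc
      simp [ih (fun c hc => hds c (List.mem_cons_of_mem _ hc))]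

lemma zip_map_fst_snd (w : List (α × α)) : (w.map Prod.fst).zip (w.map Prod.snd) = w := by
  induction w with
  | nil => rfl
  | cons p w ih => simp [ih]

/-- inversion: nothing corresponds to the empty string -/
lemma alk2_nil_right {x : List α} {kx ky w} (h : AlK2 x kx [] ky w) :
    x = [] ∧ kx = [] ∧ ky = [] ∧ w = [] := by
  cases h; exact ⟨rfl, rfl, rfl, rfl⟩

lemma alk2_nil_left {y : List α} {kx ky w} (h : AlK2 [] kx y ky w) :
    y = [] ∧ kx = [] ∧ ky = [] ∧ w = [] := by
  cases h; exact ⟨rfl, rfl, rfl, rfl⟩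

lemma consA' {nul : α} (b : α) {x kx y ky w} (h : AlN nul (nul::x) kx y ky w) :
    ∃ kx', AlN nul (nul::x) kx' (b::y) (1::ky) ((nul,b)::w) := by
  obtain ⟨k, kxt, rfl⟩ : ∃ k kxt, kx = k :: kxt := by
    have := (AlN_len h).1
    cases kx with
    | nil => simp at this
    | cons k kxt => exact ⟨k, kxt, rfl⟩
  exact ⟨(k+1)::kxt, AlN.consA b h⟩

lemma consB' {nul : α} (a : α) {x kx y ky w} (h : AlN nul x kx (nul::y) ky w) :
    ∃ ky', AlN nul (a::x) (1::kx) (nul::y) ky' ((a,nul)::w) := by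
  obtain ⟨k, kyt, rfl⟩ : ∃ k kyt, ky = k :: kyt := by
    have := (AlN_len h).2
    cases ky with
    | nil => simp at this
    | cons k kyt => exact ⟨k, kyt, rfl⟩
  exact ⟨(k+1)::kyt, AlN.consB a h⟩

/-- head is `nul` or empty -/
def Nok (nul : α) (l : List α) : Prop := l = [] ∨ ∃ t, l = nul :: t

lemma nok_cons {nul b : α} {y₀ : List α} (h : Nok nul (b :: y₀)) : b = nul := by
  rcases h with h | ⟨t, ht⟩
  · simp at h
  · exact (List.cons_eq_cons.mp ht).1

lemma nok_nul {nul : α} (t : List α) : Nok nul (nul :: t) := Or.inr ⟨t, rfl⟩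

lemma pt_split {nul : α} (l : List α) (hl : PT nul l) :
    Nok nul l ∨ ∃ (a : α) (t : List α), l = a :: t ∧ a ≠ nul := by
  cases l with
  | nil => exact Or.inl (Or.inl rfl)
  | cons a t =>
      by_cases ha : a = nul
      · exact Or.inl (Or.inr ⟨t, by rw [ha]⟩)
      · exact Or.inr ⟨a, t, rfl, ha⟩

section Master
variable [MetricSpace α]

def NSt (nul : α) (w : List (α × α)) : Prop :=
  ∀ x kx y ky, AlK2 x kx y ky w → PT nul x → PT nul y → Nok nul x → Nok nul y →
    ∃ kx' ky' w', AlN nul x kx' y ky' w' ∧ wcost dist w' ≤ wcost dist w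

def WSt (nul : α) (w : List (α × α)) : Prop :=
  ∀ a x₀ kx y ky, AlK2 (a::x₀) kx y ky w → a ≠ nul → PT nul (a::x₀) → PT nul y → Nok nul y →
    ∃ cs y₁ kx' ky' w', y = cs ++ y₁ ∧ (∀ c ∈ cs, c = nul) ∧
      AlN nul (a::x₀) kx' y₁ ky' w' ∧ wcost dist w' ≤ wcost dist w

def USt (nul : α) (w : List (α × α)) : Prop :=
  ∀ a x₀ kx b y₀ ky, AlK2 (a::x₀) kx (b::y₀) ky w → a ≠ nul → b ≠ nul →
    PT nul (a::x₀) → PT nul (b::y₀) →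
    ∃ kx' ky' w', AlN nul (a::x₀) kx' (b::y₀) ky' w' ∧ wcost dist w' ≤ wcost dist w

def W2St (nul : α) (w : List (α × α)) : Prop :=
  ∀ a x₀ kx y ky, AlK2 (a::x₀) kx y ky w → a ≠ nul → PT nul (a::x₀) → PT nul y → Nok nul y →
    ∃ kx' ky' w', AlN nul x₀ kx' y ky' w' ∧ wcost dist w' ≤ wcost dist w

def W3St (nul : α) (w : List (α × α)) : Prop :=
  ∀ a x₀ kx b y₀ ky, AlK2 (a::x₀) kx (b::y₀) ky w → a ≠ nul → b ≠ nul →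
    PT nul (a::x₀) → PT nul (b::y₀) →
    ∃ kx' ky' w', AlN nul x₀ kx' (b::y₀) ky' w' ∧ wcost dist w' ≤ wcost dist w + dist nul a

theorem master (nul : α) : ∀ (n : ℕ) (w : List (α × α)), w.length = n →
    NSt nul w ∧ WSt nul w ∧ USt nul w ∧ W2St nul w ∧ W3St nul w := by
  intro n
  induction n using Nat.strong_induction_on with
  | _ n IH =>
  intro w hw
  have IHn : ∀ w' : List (α × α), w'.length < n → NSt nul w' :=
    fun w' h => ((IH _ h w' rfl).1)
  have IHw : ∀ w' : List (α × α), w'.length < n → WSt nul w' :=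
    fun w' h => ((IH _ h w' rfl).2.1)
  have IHu : ∀ w' : List (α × α), w'.length < n → USt nul w' :=
    fun w' h => ((IH _ h w' rfl).2.2.1)
  have IH2 : ∀ w' : List (α × α), w'.length < n → W2St nul w' :=
    fun w' h => ((IH _ h w' rfl).2.2.2.1)
  have IH3 : ∀ w' : List (α × α), w'.length < n → W3St nul w' :=
    fun w' h => ((IH _ h w' rfl).2.2.2.2)
  -- mirrored versions, obtained by swapping
  have IHv : ∀ w' : List (α × α), w'.length < n → ∀ (b : α) (y₀ : List α) (ky : List ℕ)
      (x : List α) (kx : List ℕ), AlK2 x kx (b::y₀) ky w' → b ≠ nul → PT nul (b::y₀) →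
      PT nul x → Nok nul x →
      ∃ ds x₁ kx' ky' w'', x = ds ++ x₁ ∧ (∀ c ∈ ds, c = nul) ∧
        AlN nul x₁ kx' (b::y₀) ky' w'' ∧ wcost dist w'' ≤ wcost dist w' := by
    intro w' hlt b y₀ ky x kx h hb hpy hpx hnok
    obtain ⟨cs, y₁, kx', ky', w'', heq, hcs, hAl, hc⟩ :=
      IHw (w'.map Prod.swap) (by simpa using hlt) b y₀ ky x kx (AlK2_swap h) hb hpy hpx hnok
    rw [wcost_swap] at hc
    refine ⟨cs, y₁, ky', kx', w''.map Prod.swap, heq, hcs, AlN_swap hAl, ?_⟩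
    rwa [wcost_swap]
  have IHv2 : ∀ w' : List (α × α), w'.length < n → ∀ (b : α) (y₀ : List α) (ky : List ℕ)
      (x : List α) (kx : List ℕ), AlK2 x kx (b::y₀) ky w' → b ≠ nul → PT nul (b::y₀) →
      PT nul x → Nok nul x →
      ∃ kx' ky' w'', AlN nul x kx' y₀ ky' w'' ∧ wcost dist w'' ≤ wcost dist w' := by
    intro w' hlt b y₀ ky x kx h hb hpy hpx hnok
    obtain ⟨kx', ky', w'', hAl, hc⟩ :=
      IH2 (w'.map Prod.swap) (by simpa using hlt) b y₀ ky x kx (AlK2_swap h) hb hpy hpx hnok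
    rw [wcost_swap] at hc
    refine ⟨ky', kx', w''.map Prod.swap, AlN_swap hAl, ?_⟩
    rwa [wcost_swap]
  refine ⟨?_, ?_, ?_, ?_, ?_⟩
  -- ===================== NSt =====================
  · intro x kx y ky h hpx hpy hnx hny
    cases h with
    | nil => exact ⟨[], [], [], AlN.nil, le_refl _⟩
    | @consBoth x₀ kx₀ y₀ ky₀ w₀ a b h0 =>
        have hlt : w₀.length < n := by simp at hw; omega
        have ha : a = nul := nok_cons hnx
        have hb : b = nul := nok_cons hny
        subst a; subst b
        rcases pt_split x₀ (pt_tail hpx) with hx0 | ⟨a', t', rfl, ha'⟩ <;>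
          rcases pt_split y₀ (pt_tail hpy) with hy0 | ⟨b', t'', rfl, hb'⟩
        · -- both ok: N
          obtain ⟨kx', ky', w', hAl, hc⟩ :=
            IHn w₀ hlt x₀ kx₀ y₀ ky₀ h0 (pt_tail hpx) (pt_tail hpy) hx0 hy0
          refine ⟨_, _, _, AlN.consBoth nul nul hAl, ?_⟩
          simp only [wcost_cons]
          linarith
        · -- y side nonnull head: V
          obtain ⟨ds, x₁, kx', ky', w', heq, hds, hAl, hc⟩ :=
            IHv w₀ hlt b' t'' ky₀ x₀ kx₀ h0 hb' (pt_tail hpy) (pt_tail hpx) hx0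
          have hAl2 := prependQ hAl (nul :: ds) (by simp)
          rw [show (nul :: ds) ++ x₁ = nul :: x₀ by rw [List.cons_append, ← heq]] at hAl2
          refine ⟨_, _, _, hAl2, ?_⟩
          rw [wcost_append, wcost_map_right nul (nul::ds)
            (by intro c hc'; rcases List.mem_cons.1 hc' with rfl | hc'; · rfl
                · exact hds c hc')]
          simp only [wcost_cons]
          have := dist_nonneg (x := nul) (y := nul)
          linarith
        · -- x side nonnull head: W
          obtain ⟨cs, y₁, kx', ky', w', heq, hcs, hAl, hc⟩ :=
            IHw w₀ hlt a' t' kx₀ y₀ ky₀ h0 ha' (pt_tail hpx) (pt_tail hpy) hy0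
          have hAl2 := prependP hAl (nul :: cs) (by simp)
          rw [show (nul :: cs) ++ y₁ = nul :: y₀ by rw [List.cons_append, ← heq]] at hAl2
          refine ⟨_, _, _, hAl2, ?_⟩
          rw [wcost_append, wcost_map_left nul (nul::cs)
            (by intro c hc'; rcases List.mem_cons.1 hc' with rfl | hc'; · rfl
                · exact hcs c hc')]
          simp only [wcost_cons]
          have := dist_nonneg (x := nul) (y := nul)
          linarith
        · -- both nonnull heads: U
          obtain ⟨kx', ky', w', hAl, hc⟩ :=
            IHu w₀ hlt a' t' kx₀ b' t'' ky₀ h0 ha' hb' (pt_tail hpx) (pt_tail hpy)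
          refine ⟨_, _, _, AlN.consBoth nul nul hAl, ?_⟩
          simp only [wcost_cons]
          linarith
    | @consA x₀ kx₀ y₀ ky₀ w₀ k a b h0 =>
        have hlt : w₀.length < n := by simp at hw; omega
        have ha : a = nul := nok_cons hnx
        have hb : b = nul := nok_cons hny
        subst a; subst b
        rcases pt_split y₀ (pt_tail hpy) with hy0 | ⟨b', t'', rfl, hb'⟩
        · -- ok: N
          obtain ⟨kx', ky', w', hAl, hc⟩ :=
            IHn w₀ hlt (nul::x₀) (k::kx₀) y₀ ky₀ h0 hpx (pt_tail hpy) (nok_nul x₀) hy0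
          obtain ⟨kx'', hAl2⟩ := consA' nul hAl
          refine ⟨_, _, _, hAl2, ?_⟩
          simp only [wcost_cons]
          linarith
        · -- y₀ nonnull head: V
          obtain ⟨ds, x₁, kx', ky', w', heq, hds, hAl, hc⟩ :=
            IHv w₀ hlt b' t'' ky₀ (nul::x₀) (k::kx₀) h0 hb' (pt_tail hpy) hpx (nok_nul x₀)
          cases ds with
          | nil =>
              simp only [List.nil_append] at heq
              rw [← heq] at hAl
              obtain ⟨kx'', hAl2⟩ := consA' nul hAl
              refine ⟨_, _, _, hAl2, ?_⟩
              simp only [wcost_cons]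
              linarith
          | cons d ds' =>
              have hAl2 := prependQ hAl (d :: ds') (by simp)
              rw [← heq] at hAl2
              refine ⟨_, _, _, hAl2, ?_⟩
              rw [wcost_append, wcost_map_right nul (d::ds') hds]
              simp only [wcost_cons]
              have := dist_nonneg (x := nul) (y := nul)
              linarith
    | @consB x₀ kx₀ y₀ ky₀ w₀ k a b h0 =>
        have hlt : w₀.length < n := by simp at hw; omega
        have ha : a = nul := nok_cons hnx
        have hb : b = nul := nok_cons hny
        subst a; subst b
        rcases pt_split x₀ (pt_tail hpx) with hx0 | ⟨a', t', rfl, ha'⟩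
        · -- ok: N
          obtain ⟨kx', ky', w', hAl, hc⟩ :=
            IHn w₀ hlt x₀ kx₀ (nul::y₀) (k::ky₀) h0 (pt_tail hpx) hpy hx0 (nok_nul y₀)
          obtain ⟨ky'', hAl2⟩ := consB' nul hAl
          refine ⟨_, _, _, hAl2, ?_⟩
          simp only [wcost_cons]
          linarith
        · -- x₀ nonnull head: W
          obtain ⟨cs, y₁, kx', ky', w', heq, hcs, hAl, hc⟩ :=
            IHw w₀ hlt a' t' kx₀ (nul::y₀) (k::ky₀) h0 ha' (pt_tail hpx) hpy (nok_nul y₀)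
          cases cs with
          | nil =>
              simp only [List.nil_append] at heq
              rw [← heq] at hAl
              obtain ⟨ky'', hAl2⟩ := consB' nul hAl
              refine ⟨_, _, _, hAl2, ?_⟩
              simp only [wcost_cons]
              linarith
          | cons d cs' =>
              have hAl2 := prependP hAl (d :: cs') (by simp)
              rw [← heq] at hAl2
              refine ⟨_, _, _, hAl2, ?_⟩
              rw [wcost_append, wcost_map_left nul (d::cs') hcs]
              simp only [wcost_cons]
              have := dist_nonneg (x := nul) (y := nul)
              linarith
  -- ===================== WSt =====================
  · intro a x₀ kx y ky h ha hpx hpy hny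
    obtain ⟨x₁, rfl, -⟩ := pt_cons_nonnul hpx ha
    cases h with
    | @consBoth x₀' kx₀ y₀ ky₀ w₀ a' b h0 =>
        have hlt : w₀.length < n := by simp at hw; omega
        have hb : b = nul := nok_cons hny
        subst b
        rcases pt_split y₀ (pt_tail hpy) with hy0 | ⟨b', t'', rfl, hb'⟩
        · -- ok: N, then consBoth
          obtain ⟨kx', ky', w', hAl, hc⟩ :=
            IHn w₀ hlt (nul::x₁) kx₀ y₀ ky₀ h0 (pt_tail hpx) (pt_tail hpy) (nok_nul x₁) hy0
          refine ⟨[], _, _, _, _, rfl, by simp, AlN.consBoth a nul hAl, ?_⟩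
          simp only [wcost_cons]
          linarith
        · -- y₀ nonnull head: V
          obtain ⟨ds, x₁', kx', ky', w', heq, hds, hAl, hc⟩ :=
            IHv w₀ hlt b' t'' ky₀ (nul::x₁) kx₀ h0 hb' (pt_tail hpy) (pt_tail hpx)
              (nok_nul x₁)
          have hAl2 := prependQ hAl (a :: ds) (by simp)
          rw [show (a :: ds) ++ x₁' = a :: nul :: x₁ by rw [List.cons_append, ← heq]] at hAl2
          refine ⟨[], _, _, _, _, rfl, by simp, hAl2, ?_⟩
          simp only [List.map_cons, List.cons_append, wcost_cons]
          rw [wcost_append, wcost_map_right nul ds hds]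
          linarith
    | @consA x₀' kx₀ y₀ ky₀ w₀ k a' b h0 =>
        have hlt : w₀.length < n := by simp at hw; omega
        have hb : b = nul := nok_cons hny
        subst b
        obtain ⟨-, hy₀⟩ := pt_nul_tail hpy
        rcases hy₀ with rfl | ⟨b', t'', rfl, hb'⟩
        · obtain ⟨h1, -, -, -⟩ := alk2_nil_right h0
          simp at h1
        · obtain ⟨kx', ky', w', hAl, hc⟩ :=
            IHu w₀ hlt a (nul::x₁) (k::kx₀) b' t'' ky₀ h0 ha hb' hpx (pt_tail hpy)
          refine ⟨[nul], b'::t'', _, _, _, rfl, by simp, hAl, ?_⟩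
          simp only [wcost_cons]
          have := dist_nonneg (x := a) (y := nul)
          linarith
    | @consB x₀' kx₀ y₀ ky₀ w₀ k a' b h0 =>
        have hlt : w₀.length < n := by simp at hw; omega
        have hb : b = nul := nok_cons hny
        subst b
        obtain ⟨kx', ky', w', hAl, hc⟩ :=
          IHn w₀ hlt (nul::x₁) kx₀ (nul::y₀) (k::ky₀) h0 (pt_tail hpx) hpy
            (nok_nul x₁) (nok_nul y₀)
        obtain ⟨ky'', hAl2⟩ := consB' a hAl
        refine ⟨[], _, _, _, _, rfl, by simp, hAl2, ?_⟩
        simp only [wcost_cons]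
        linarith
  -- ===================== USt =====================
  · intro a x₀ kx b y₀ ky h ha hb hpx hpy
    obtain ⟨x₁, rfl, -⟩ := pt_cons_nonnul hpx ha
    obtain ⟨y₁, rfl, -⟩ := pt_cons_nonnul hpy hb
    cases h with
    | @consBoth x₀' kx₀ y₀' ky₀ w₀ a' b' h0 =>
        have hlt : w₀.length < n := by simp at hw; omega
        obtain ⟨kx', ky', w', hAl, hc⟩ :=
          IHn w₀ hlt (nul::x₁) kx₀ (nul::y₁) ky₀ h0 (pt_tail hpx) (pt_tail hpy)
            (nok_nul x₁) (nok_nul y₁)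
        refine ⟨_, _, _, AlN.consBoth a b hAl, ?_⟩
        simp only [wcost_cons]
        linarith
    | @consA x₀' kx₀ y₀' ky₀ w₀ k a' b' h0 =>
        have hlt : w₀.length < n := by simp at hw; omega
        obtain ⟨kx', ky', w', hAl, hc⟩ :=
          IH2 w₀ hlt a (nul::x₁) (k::kx₀) (nul::y₁) ky₀ h0 ha hpx (pt_tail hpy)
            (nok_nul y₁)
        refine ⟨_, _, _, AlN.consBoth a b hAl, ?_⟩
        simp only [wcost_cons]
        linarith
    | @consB x₀' kx₀ y₀' ky₀ w₀ k a' b' h0 =>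
        have hlt : w₀.length < n := by simp at hw; omega
        obtain ⟨kx', ky', w', hAl, hc⟩ :=
          IHv2 w₀ hlt b (nul::y₁) (k::ky₀) (nul::x₁) kx₀ h0 hb hpy (pt_tail hpx)
            (nok_nul x₁)
        refine ⟨_, _, _, AlN.consBoth a b hAl, ?_⟩
        simp only [wcost_cons]
        linarith
  -- ===================== W2St =====================
  · intro a x₀ kx y ky h ha hpx hpy hny
    obtain ⟨x₁, rfl, -⟩ := pt_cons_nonnul hpx ha
    cases h with
    | @consBoth x₀' kx₀ y₀ ky₀ w₀ a' b h0 =>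
        have hlt : w₀.length < n := by simp at hw; omega
        have hb : b = nul := nok_cons hny
        subst b
        rcases pt_split y₀ (pt_tail hpy) with hy0 | ⟨b', t'', rfl, hb'⟩
        · -- ok: N, then consume nul on x-head
          obtain ⟨kx', ky', w', hAl, hc⟩ :=
            IHn w₀ hlt (nul::x₁) kx₀ y₀ ky₀ h0 (pt_tail hpx) (pt_tail hpy) (nok_nul x₁) hy0
          obtain ⟨kx'', hAl2⟩ := consA' nul hAl
          refine ⟨_, _, _, hAl2, ?_⟩
          simp only [wcost_cons]
          have := dist_nonneg (x := a) (y := nul)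
          linarith [dist_self nul]
        · -- y₀ nonnull head: V
          obtain ⟨ds, x₁', kx', ky', w', heq, hds, hAl, hc⟩ :=
            IHv w₀ hlt b' t'' ky₀ (nul::x₁) kx₀ h0 hb' (pt_tail hpy) (pt_tail hpx)
              (nok_nul x₁)
          cases ds with
          | nil =>
              simp only [List.nil_append] at heq
              rw [← heq] at hAl
              obtain ⟨kx'', hAl2⟩ := consA' nul hAl
              refine ⟨_, _, _, hAl2, ?_⟩
              simp only [wcost_cons]
              have := dist_nonneg (x := a) (y := nul)
              linarith [dist_self nul]
          | cons d ds' =>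
              have hAl2 := prependQ hAl (d :: ds') (by simp)
              rw [← heq] at hAl2
              refine ⟨_, _, _, hAl2, ?_⟩
              rw [wcost_append, wcost_map_right nul (d::ds') hds]
              simp only [wcost_cons]
              have := dist_nonneg (x := a) (y := nul)
              linarith
    | @consA x₀' kx₀ y₀ ky₀ w₀ k a' b h0 =>
        have hlt : w₀.length < n := by simp at hw; omega
        have hb : b = nul := nok_cons hny
        subst b
        obtain ⟨-, hy₀⟩ := pt_nul_tail hpy
        rcases hy₀ with rfl | ⟨b', t'', rfl, hb'⟩
        · obtain ⟨h1, -, -, -⟩ := alk2_nil_right h0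
          simp at h1
        · obtain ⟨kx', ky', w', hAl, hc⟩ :=
            IH3 w₀ hlt a (nul::x₁) (k::kx₀) b' t'' ky₀ h0 ha hb' hpx (pt_tail hpy)
          obtain ⟨kx'', hAl2⟩ := consA' nul hAl
          refine ⟨_, _, _, hAl2, ?_⟩
          simp only [wcost_cons]
          have h1 := dist_comm a nul
          linarith [dist_self nul]
    | @consB x₀' kx₀ y₀ ky₀ w₀ k a' b h0 =>
        have hlt : w₀.length < n := by simp at hw; omega
        have hb : b = nul := nok_cons hny
        subst b
        obtain ⟨kx', ky', w', hAl, hc⟩ :=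
          IHn w₀ hlt (nul::x₁) kx₀ (nul::y₀) (k::ky₀) h0 (pt_tail hpx) hpy
            (nok_nul x₁) (nok_nul y₀)
        refine ⟨_, _, _, hAl, ?_⟩
        simp only [wcost_cons]
        have := dist_nonneg (x := a) (y := nul)
        linarith
  -- ===================== W3St =====================
  · intro a x₀ kx b y₀ ky h ha hb hpx hpy
    obtain ⟨x₁, rfl, -⟩ := pt_cons_nonnul hpx ha
    obtain ⟨y₁, rfl, -⟩ := pt_cons_nonnul hpy hb
    cases h with
    | @consBoth x₀' kx₀ y₀' ky₀ w₀ a' b' h0 =>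
        have hlt : w₀.length < n := by simp at hw; omega
        obtain ⟨kx', ky', w', hAl, hc⟩ :=
          IHn w₀ hlt (nul::x₁) kx₀ (nul::y₁) ky₀ h0 (pt_tail hpx) (pt_tail hpy)
            (nok_nul x₁) (nok_nul y₁)
        obtain ⟨kx'', hAl2⟩ := consA' b hAl
        refine ⟨_, _, _, hAl2, ?_⟩
        simp only [wcost_cons]
        have htri := dist_triangle nul a b
        linarith
    | @consA x₀' kx₀ y₀' ky₀ w₀ k a' b' h0 =>
        have hlt : w₀.length < n := by simp at hw; omega
        obtain ⟨kx', ky', w', hAl, hc⟩ :=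
          IH2 w₀ hlt a (nul::x₁) (k::kx₀) (nul::y₁) ky₀ h0 ha hpx (pt_tail hpy)
            (nok_nul y₁)
        obtain ⟨kx'', hAl2⟩ := consA' b hAl
        refine ⟨_, _, _, hAl2, ?_⟩
        simp only [wcost_cons]
        have htri := dist_triangle nul a b
        linarith
    | @consB x₀' kx₀ y₀' ky₀ w₀ k a' b' h0 =>
        have hlt : w₀.length < n := by simp at hw; omega
        obtain ⟨kx', ky', w', hAl, hc⟩ :=
          IHv2 w₀ hlt b (nul::y₁) (k::ky₀) (nul::x₁) kx₀ h0 hb hpy (pt_tail hpx)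
            (nok_nul x₁)
        obtain ⟨kx'', hAl2⟩ := consA' b hAl
        refine ⟨_, _, _, hAl2, ?_⟩
        simp only [wcost_cons]
        have htri := dist_triangle nul a b
        linarith

end Master

lemma pad_cons (nul a : α) (x : List α) : pad nul (a :: x) = nul :: a :: pad nul x := by
  simp [pad]

lemma pad_PT (nul : α) : ∀ (x : List α), (∀ l ∈ x, l ≠ nul) → PT nul (pad nul x) := by
  intro x
  induction x with
  | nil => intro _; simpa [pad] using PT.one
  | cons a x ih =>
      intro h
      rw [pad_cons]
      have ha : a ≠ nul := h a List.mem_cons_self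
      have ihx := ih (fun l hl => h l (List.mem_cons_of_mem _ hl))
      have hpadx : pad nul x = nul :: (x.flatMap fun a => [a, nul]) := rfl
      rw [hpadx] at ihx ⊢
      exact PT.consN a ha (PT.consA a ha ihx)

lemma pad_length (nul : α) (x : List α) : (pad nul x).length = 2 * x.length + 1 := by
  induction x with
  | nil => simp [pad]
  | cons a x ih => rw [pad_cons]; simp at ih ⊢; omega

lemma corrCost_nonneg [MetricSpace α] (xb yb : List α) : 0 ≤ corrCost dist xb yb := by
  apply List.sum_nonneg
  intro r hr
  obtain ⟨p, -, rfl⟩ := List.mem_map.1 hr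
  exact dist_nonneg

lemma finite_AlN_set [MetricSpace α] (nul : α) (X Y : List α) :
    {c : ℝ | ∃ kx ky w, AlN nul X kx Y ky w ∧ c = wcost dist w}.Finite := by
  classical
  set A := {p : α × α | p.1 ∈ X ∧ p.2 ∈ Y} with hA
  have hAfin : A.Finite := (X.finite_toSet.prod Y.finite_toSet).subset
    (fun p hp => ⟨hp.1, hp.2⟩)
  haveI := hAfin.to_subtype
  have h1 : {l : List A | l.length ≤ X.length + Y.length}.Finite :=
    List.finite_length_le _ _
  have h2 := h1.image (List.map (Subtype.val))
  have hW : {w : List (α × α) | w.length ≤ X.length + Y.length ∧ ∀ p ∈ w, p ∈ A}.Finite := by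
    apply h2.subset
    rintro w ⟨hlen, hmem⟩
    refine ⟨w.pmap (fun p hp => (⟨p, hp⟩ : A)) hmem, by simpa using hlen, ?_⟩
    simp [List.map_pmap]
  have h3 := hW.image (wcost dist)
  apply h3.subset
  rintro c ⟨kx, ky, w, hAl, rfl⟩
  exact ⟨w, ⟨AlN_len_bound hAl, fun p hp => AlN_pairs_mem hAl p hp⟩, rfl⟩

end Stmt4Aux

/-- There is an optimal correspondence between `p(x)` and `p(y)` in which no run
of a non-null letter is extended (every non-null letter gets multiplicity 1). -/
theorem stmt4 [MetricSpace α] (nul : α) (n : ℕ) (x y : List α)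
    (hx : x.length = n) (hy : y.length = n)
    (hxn : ∀ l ∈ x, l ≠ nul) (hyn : ∀ l ∈ y, l ≠ nul) :
    ∃ (xb yb : List α) (ksx ksy : List ℕ),
      IsExpansionWith (pad nul x) ksx xb ∧ IsExpansionWith (pad nul y) ksy yb ∧
      xb.length = yb.length ∧
      corrCost dist xb yb = dtw dist (pad nul x) (pad nul y) ∧
      (∀ p ∈ (pad nul x).zip ksx, p.1 ≠ nul → p.2 = 1) ∧
      (∀ p ∈ (pad nul y).zip ksy, p.1 ≠ nul → p.2 = 1) := by
  classical
  set X := pad nul x with hX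
  set Y := pad nul y with hY
  have hlenXY : X.length = Y.length := by
    rw [hX, hY, Stmt4Aux.pad_length, Stmt4Aux.pad_length, hx, hy]
  have hdiag := Stmt4Aux.AlN_diag nul X Y hlenXY
  set T := {c : ℝ | ∃ kx ky w, Stmt4Aux.AlN nul X kx Y ky w ∧ c = Stmt4Aux.wcost dist w}
    with hT
  have hTfin : T.Finite := Stmt4Aux.finite_AlN_set nul X Y
  have hTne : T.Nonempty := ⟨_, _, _, _, hdiag, rfl⟩
  have ht0 := hTne.csInf_mem hTfin
  obtain ⟨kxs, kys, ws, hAlN, ht0e⟩ := ht0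
  have hexp := Stmt4Aux.AlK_expansions (Stmt4Aux.AlK2_to_AlK (Stmt4Aux.AlN_to_AlK2 hAlN))
  have hfs : (ws.map Prod.fst).length = (ws.map Prod.snd).length := by simp
  have hcc : corrCost dist (ws.map Prod.fst) (ws.map Prod.snd) = Stmt4Aux.wcost dist ws := by
    unfold corrCost Stmt4Aux.wcost
    rw [Stmt4Aux.zip_map_fst_snd]
  set S := {c | ∃ xb yb, IsCorrespondence X Y xb yb ∧ c = corrCost dist xb yb} with hS
  have hPTX : Stmt4Aux.PT nul X := Stmt4Aux.pad_PT nul x hxn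
  have hPTY : Stmt4Aux.PT nul Y := Stmt4Aux.pad_PT nul y hyn
  have hNokX : Stmt4Aux.Nok nul X := Or.inr ⟨_, rfl⟩
  have hNokY : Stmt4Aux.Nok nul Y := Or.inr ⟨_, rfl⟩
  have hlb : ∀ c ∈ S, sInf T ≤ c := by
    rintro c ⟨xb, yb, ⟨⟨kx, hkx⟩, ⟨ky, hky⟩, hl⟩, rfl⟩
    have hAlK := Stmt4Aux.corr_to_AlK xb yb X kx Y ky hkx hky hl
    obtain ⟨kx2, ky2, w2, hA2, hc2⟩ := Stmt4Aux.collapse hAlK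
    obtain ⟨kx3, ky3, w3, hA3, hc3⟩ :=
      ((Stmt4Aux.master nul w2.length w2 rfl).1) X kx2 Y ky2 hA2 hPTX hPTY hNokX hNokY
    have hmem : Stmt4Aux.wcost dist w3 ∈ T := ⟨kx3, ky3, w3, hA3, rfl⟩
    have h1 : sInf T ≤ Stmt4Aux.wcost dist w3 := csInf_le hTfin.bddBelow hmem
    have h2 : corrCost dist xb yb = Stmt4Aux.wcost dist (xb.zip yb) := rfl
    rw [h2]
    linarith
  have hmemS : sInf T ∈ S := ⟨ws.map Prod.fst, ws.map Prod.snd,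
    ⟨⟨kxs, hexp.1⟩, ⟨kys, hexp.2⟩, hfs⟩, by rw [hcc, ← ht0e]⟩
  have hSbdd : BddBelow S := by
    refine ⟨0, ?_⟩
    rintro c ⟨xb, yb, -, rfl⟩
    exact Stmt4Aux.corrCost_nonneg xb yb
  have hdtwS : dtw dist X Y = sInf S := rfl
  have hdtw : dtw dist X Y = sInf T := by
    rw [hdtwS]
    exact le_antisymm (csInf_le hSbdd hmemS) (le_csInf ⟨_, hmemS⟩ hlb)
  refine ⟨ws.map Prod.fst, ws.map Prod.snd, kxs, kys, hexp.1, hexp.2, hfs, ?_, ?_, ?_⟩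
  · rw [hcc, ← ht0e, hdtw]
  · exact (Stmt4Aux.AlN_nonnul_mult hAlN).1
  · exact (Stmt4Aux.AlN_nonnul_mult hAlN).2
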